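/- Let A be a finite-dimensional algebra over a field and f an idempotent of A such that the A-module A/⟨f⟩ has projective dimension at most 1. Then Ext^1_A(A/⟨f⟩, A/⟨f⟩) = 0. -/

import Mathlib

open CategoryTheory

noncomputable section

/-- Vanishing of the `n`-th Ext group of two `A`-modules. -/
def ExtVanish (A : Type) [Ring A] (n : ℕ) (X Y : ModuleCat.{0} A) : Prop :=
  Limits.IsZero (((Ext ℤ (ModuleCat.{0} A) n).obj (Opposite.op X)).obj Y)

/-- `M` belongs to `add X`: it is a direct summand of a finite direct sum of copies of `X`. -/
def InAdd (A : Type) [Ring A] (X M : ModuleCat.{0} A) : Prop :=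
  ∃ (n : ℕ) (i : M →ₗ[A] (Fin n → X)) (p : (Fin n → X) →ₗ[A] M),
    p.comp i = LinearMap.id

/-- `N` is a (first) syzygy of `M`: there is an exact sequence `0 → N → P → M → 0`
with `P` projective. -/
def IsSyzygyOf (A : Type) [Ring A] (N M : ModuleCat.{0} A) : Prop :=
  ∃ (P : ModuleCat.{0} A), Module.Projective A P ∧
    ∃ (ι : N →ₗ[A] P) (π : P →ₗ[A] M),
      Function.Injective ι ∧ Function.Surjective π ∧ Function.Exact ι π

/-- `N` is an `n`-th syzygy of `M`. -/
def IsNthSyzygyOf (A : Type) [Ring A] : ℕ → ModuleCat.{0} A → ModuleCat.{0} A → Prop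
  | 0, N, M => Nonempty (N ≅ M)
  | n + 1, N, M => ∃ K : ModuleCat.{0} A, IsSyzygyOf A K M ∧ IsNthSyzygyOf A n N K

/-- `N` is a (first) cosyzygy of `M`: there is an exact sequence `0 → M → I → N → 0`
with `I` injective. -/
def IsCosyzygyOf (A : Type) [Ring A] (N M : ModuleCat.{0} A) : Prop :=
  ∃ (I : ModuleCat.{0} A), Module.Injective A I ∧
    ∃ (ι : M →ₗ[A] I) (π : I →ₗ[A] N),
      Function.Injective ι ∧ Function.Surjective π ∧ Function.Exact ι π

/-- `N` is an `n`-th cosyzygy of `M`. -/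
def IsNthCosyzygyOf (A : Type) [Ring A] : ℕ → ModuleCat.{0} A → ModuleCat.{0} A → Prop
  | 0, N, M => Nonempty (N ≅ M)
  | n + 1, N, M => ∃ K : ModuleCat.{0} A, IsCosyzygyOf A K M ∧ IsNthCosyzygyOf A n N K

/-- The projective dimension of `M` is at most `n`. -/
def ProjDimLE (A : Type) [Ring A] (n : ℕ) (M : ModuleCat.{0} A) : Prop :=
  ∃ K : ModuleCat.{0} A, IsNthSyzygyOf A n K M ∧ Module.Projective A K

/-- The injective dimension of `M` is at most `n`. -/
def InjDimLE (A : Type) [Ring A] (n : ℕ) (M : ModuleCat.{0} A) : Prop :=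
  ∃ K : ModuleCat.{0} A, IsNthCosyzygyOf A n K M ∧ Module.Injective A K

/-- The underlying type of `D(A) = Hom_k(A, k)`. -/
def DualMod (k A : Type) [Field k] [Ring A] [Algebra k A] : Type := A →ₗ[k] k

instance (k A : Type) [Field k] [Ring A] [Algebra k A] : AddCommGroup (DualMod k A) :=
  inferInstanceAs (AddCommGroup (A →ₗ[k] k))

/-- Auxiliary scalar action for `DualMod`. -/
def dualSMul (k A : Type) [Field k] [Ring A] [Algebra k A] (a : A) (φ : A →ₗ[k] k) :
    A →ₗ[k] k := φ.comp (LinearMap.mulRight k a)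

/-- The left `A`-module structure on `D(A)`: `(a • φ) x = φ (x * a)`. -/
instance (k A : Type) [Field k] [Ring A] [Algebra k A] : Module A (DualMod k A) where
  smul a φ := dualSMul k A a φ
  one_smul φ := by
    show dualSMul k A 1 φ = φ
    unfold dualSMul; ext x; exact LinearMap.congr_arg (f := φ) (mul_one x)
  mul_smul a b φ := by
    show dualSMul k A (a * b) φ = dualSMul k A a (dualSMul k A b φ)
    unfold dualSMul; ext x; exact LinearMap.congr_arg (f := φ) (mul_assoc x a b).symm
  smul_zero a := by
    show dualSMul k A a 0 = 0
    unfold dualSMul; ext x; simp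
  smul_add a φ ψ := by
    show dualSMul k A a (φ + ψ) = dualSMul k A a φ + dualSMul k A a ψ
    unfold dualSMul; ext x; rfl
  add_smul a b φ := by
    show dualSMul k A (a + b) φ = dualSMul k A a φ + dualSMul k A b φ
    unfold dualSMul; ext x; exact (LinearMap.congr_arg (f := φ) (mul_add x a b)).trans (map_add (F := A →ₗ[k] k) φ _ _)
  zero_smul φ := by
    show dualSMul k A 0 φ = 0
    unfold dualSMul; ext x; exact (LinearMap.congr_arg (f := φ) (mul_zero x)).trans (map_zero (F := A →ₗ[k] k) φ)

/-- `D(A)`, the dual of the right regular module, as an object of `ModuleCat A`. -/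
def DualA (k A : Type) [Field k] [Ring A] [Algebra k A] : ModuleCat.{0} A :=
  ModuleCat.of A (DualMod k A)

/-- The idempotent ideal `⟨e⟩ = AeA`, as a left submodule of `A`. -/
def idemIdeal (A : Type) [Ring A] (e : A) : Submodule A A :=
  Submodule.span A (Set.range fun b : A => e * b)

/-- The quotient `A/⟨e⟩` as a left `A`-module. -/
def quotMod (A : Type) [Ring A] (e : A) : ModuleCat.{0} A :=
  ModuleCat.of A (A ⧸ idemIdeal A e)

/-- The left ideal `Ae = {x | x * e = x}` (for `e` idempotent), as a submodule of `A`. -/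
def leftPart (A : Type) [Ring A] (e : A) : Submodule A A where
  carrier := {x | x * e = x}
  add_mem' := by intro a b ha hb; simp only [Set.mem_setOf_eq] at *; rw [add_mul, ha, hb]
  zero_mem' := by simp
  smul_mem' := by intro c x hx; simp only [Set.mem_setOf_eq, smul_eq_mul] at *;
                  rw [mul_assoc, hx]

/-- `Ae` as an object of `ModuleCat A`. -/
def AeMod (A : Type) [Ring A] (e : A) : ModuleCat.{0} A :=
  ModuleCat.of A (leftPart A e)

/-- `M` is Gorenstein projective: `Ext^i_A(M, A) = 0` for all `i > 0`. -/
def IsGorensteinProjective (A : Type) [Ring A] (M : ModuleCat.{0} A) : Prop :=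
  ∀ i : ℕ, 0 < i → ExtVanish A i M (ModuleCat.of A A)

/-- `M` is Gorenstein injective: `Ext^i_A(D(A), M) = 0` for all `i > 0`. -/
def IsGorensteinInjective (k A : Type) [Field k] [Ring A] [Algebra k A]
    (M : ModuleCat.{0} A) : Prop :=
  ∀ i : ℕ, 0 < i → ExtVanish A i (DualA k A) M

/-- `M ∈ gen_l(Ae)`: `M` has a projective resolution whose terms in degrees `≤ l`
lie in `add (Ae)`. -/
def GenLE (A : Type) [Ring A] (e : A) (l : ℕ) (M : ModuleCat.{0} A) : Prop :=
  ∃ (P : ℕ → ModuleCat.{0} A) (d : ∀ n : ℕ, (P (n + 1) →ₗ[A] P n)) (π : P 0 →ₗ[A] M),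
    (∀ n, Module.Projective A (P n)) ∧
    Function.Surjective π ∧
    Function.Exact (d 0) π ∧
    (∀ n, Function.Exact (d (n + 1)) (d n)) ∧
    (∀ n ≤ l, InAdd A (AeMod A e) (P n))

/-- If `A/⟨f⟩` has projective dimension at most one as an `A`-module,
then `Ext¹_A(A/⟨f⟩, A/⟨f⟩) = 0`. -/
theorem stmt_3 (k A : Type) [Field k] [Ring A] [Algebra k A] [FiniteDimensional k A]
    (f : A) (hf : IsIdempotentElem f)
    (hpd : ProjDimLE A 1 (quotMod A f)) :
    ExtVanish A 1 (quotMod A f) (quotMod A f) := by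
  unfold ExtVanish
  obtain ⟨P⟩ := (HasProjectiveResolution.out (Z := quotMod A f))
  refine Limits.IsZero.of_iso ?_ (P.isoExt 1 (quotMod A f))
  rw [← HomologicalComplex.exactAt_iff_isZero_homology]
  rw [HomologicalComplex.exactAt_iff' _ 0 1 2 (by simp) (by simp)]
  rw [ShortComplex.moduleCat_exact_iff]
  intro φ₀ hφ₀
  obtain ⟨φ, rfl⟩ : ∃ ψ : P.complex.X 1 ⟶ quotMod A f, ψ = φ₀ := ⟨φ₀, rfl⟩
  have hφ : P.complex.d 2 1 ≫ φ = 0 := hφ₀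
  have hφ' : ∀ u, φ (P.complex.d 2 1 u) = 0 := by
    intro u
    have := congrArg (fun (g : P.complex.X 2 ⟶ quotMod A f) => g u) hφ
    simpa using this
  have ε : P.complex.X 0 ⟶ quotMod A f := P.π.f 0
  clear ε
  have exact₀M : ∀ x, (P.π.f 0 : P.complex.X 0 ⟶ quotMod A f) x = 0 →
      ∃ y, P.complex.d 1 0 y = x :=
    (ShortComplex.moduleCat_exact_iff _).1 P.exact₀
  have exact₁M : ∀ z, P.complex.d 1 0 z = 0 → ∃ w, P.complex.d 2 1 w = z :=
    (ShortComplex.moduleCat_exact_iff _).1 (P.exact_succ 0)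
  have hεd : ∀ y, (P.π.f 0 : P.complex.X 0 ⟶ quotMod A f) (P.complex.d 1 0 y) = 0 := by
    intro y
    calc (P.π.f 0 : P.complex.X 0 ⟶ quotMod A f) (P.complex.d 1 0 y)
        = (P.complex.d 1 0 ≫ P.π.f 0) y := rfl
      _ = (0 : P.complex.X 1 ⟶ ((ChainComplex.single₀ (ModuleCat A)).obj (quotMod A f)).X 0) y := by
          rw [P.complex_d_comp_π_f_zero]
      _ = 0 := rfl
  have εsurj : Function.Surjective (P.π.f 0) :=
    (ModuleCat.epi_iff_surjective (P.π.f 0)).1 inferInstance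
  have hfI : f ∈ idemIdeal A f := Submodule.subset_span ⟨1, mul_one f⟩
  have hIr : ∀ i ∈ idemIdeal A f, ∀ c : A, i * c ∈ idemIdeal A f := by
    intro i hi c
    induction hi using Submodule.span_induction with
    | mem x hx =>
      obtain ⟨b, rfl⟩ := hx
      exact Submodule.subset_span ⟨b * c, (mul_assoc _ _ _).symm⟩
    | zero => simpa using (idemIdeal A f).zero_mem
    | add x y _ _ hx hy => simpa [add_mul] using (idemIdeal A f).add_mem hx hy
    | smul a x _ hx => simpa [smul_eq_mul, mul_assoc] using (idemIdeal A f).smul_mem a hx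
  have hIz : ∀ i ∈ idemIdeal A f, ∀ v : quotMod A f, i • v = 0 := by
    intro i hi v
    obtain ⟨c, rfl⟩ := Submodule.Quotient.mk_surjective (idemIdeal A f) v
    show i • (Submodule.Quotient.mk c : A ⧸ idemIdeal A f) = 0
    rw [← Submodule.Quotient.mk_smul, Submodule.Quotient.mk_eq_zero]
    exact hIr i hi c
  obtain ⟨p, hp⟩ := εsurj (Submodule.Quotient.mk 1)
  have kerφ : ∀ z, P.complex.d 1 0 z = 0 → φ z = 0 := by
    intro z hz
    obtain ⟨w, hw⟩ := exact₁M z hz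
    rw [← hw]; exact hφ' w
  have lemA : ∀ i ∈ idemIdeal A f, ∀ x, ∃ z, P.complex.d 1 0 z = i • x ∧ φ z = 0 := by
    have fcase : ∀ x, ∃ z, P.complex.d 1 0 z = f • x ∧ φ z = 0 := by
      intro x
      have h1 : (P.π.f 0 : P.complex.X 0 ⟶ quotMod A f) (f • x) = 0 := by
        rw [map_smul]; exact hIz f hfI _
      obtain ⟨z₀, hz₀⟩ := exact₀M _ h1
      refine ⟨f • z₀, ?_, ?_⟩
      · rw [map_smul, hz₀, smul_smul, hf]
      · rw [map_smul]; exact hIz f hfI _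
    intro i hi
    induction hi using Submodule.span_induction with
    | mem i hi =>
      obtain ⟨b, rfl⟩ := hi
      intro x
      obtain ⟨z, hz, hz0⟩ := fcase (b • x)
      exact ⟨z, by rw [hz, smul_smul], hz0⟩
    | zero => intro x; exact ⟨0, by simp, by simp⟩
    | add i j _ _ hi hj =>
      intro x
      obtain ⟨z₁, hz₁, h₁⟩ := hi x
      obtain ⟨z₂, hz₂, h₂⟩ := hj x
      exact ⟨z₁ + z₂, by rw [map_add, hz₁, hz₂, add_smul],
        by rw [map_add, h₁, h₂, add_zero]⟩
    | smul c i _ hi =>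
      intro x
      obtain ⟨z, hz, h0⟩ := hi x
      refine ⟨c • z, ?_, by rw [map_smul, h0, smul_zero]⟩
      rw [map_smul, hz, smul_smul, smul_eq_mul]
  have welldef : ∀ (x : P.complex.X 0) (a a' : A) (u u' : P.complex.X 1),
      Submodule.Quotient.mk a = (P.π.f 0 : P.complex.X 0 ⟶ quotMod A f) x →
      Submodule.Quotient.mk a' = (P.π.f 0 : P.complex.X 0 ⟶ quotMod A f) x →
      P.complex.d 1 0 u = x - a • p → P.complex.d 1 0 u' = x - a' • p → φ u = φ u' := by
    intro x a a' u u' ha ha' hu hu'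
    have hI' : a' - a ∈ idemIdeal A f := by
      rw [← Submodule.Quotient.mk_eq_zero (p := idemIdeal A f),
        Submodule.Quotient.mk_sub, ha, ha']; exact sub_self _
    obtain ⟨z, hz, hz0⟩ := lemA (a' - a) hI' p
    have hker : P.complex.d 1 0 (u - u' - z) = 0 := by
      rw [map_sub, map_sub, hu, hu', hz, sub_smul]
      abel
    have h0 := kerφ _ hker
    rw [map_sub, map_sub, hz0, sub_zero, sub_eq_zero] at h0
    exact h0
  have hex : ∀ x : P.complex.X 0, ∃ (a : A) (y : P.complex.X 1),
      Submodule.Quotient.mk a = (P.π.f 0 : P.complex.X 0 ⟶ quotMod A f) x ∧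
      P.complex.d 1 0 y = x - a • p := by
    intro x
    obtain ⟨a, ha⟩ := Submodule.Quotient.mk_surjective (idemIdeal A f)
      ((P.π.f 0 : P.complex.X 0 ⟶ quotMod A f) x)
    have h1 : (P.π.f 0 : P.complex.X 0 ⟶ quotMod A f) (x - a • p) = 0 := by
      rw [map_sub, map_smul, hp]
      show (show A ⧸ idemIdeal A f from (P.π.f 0 : P.complex.X 0 ⟶ quotMod A f) x) - a • (Submodule.Quotient.mk 1 : A ⧸ idemIdeal A f) = 0
      rw [← Submodule.Quotient.mk_smul, smul_eq_mul, mul_one]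
      exact sub_eq_zero.mpr ha.symm
    obtain ⟨y, hy⟩ := exact₀M _ h1
    exact ⟨a, y, ha, hy⟩
  choose a y ha hy using hex
  refine ⟨ModuleCat.ofHom (⟨⟨fun x => φ (y x), ?_⟩, ?_⟩ : P.complex.X 0 →ₗ[A] quotMod A f), ?_⟩
  · intro x₁ x₂
    have h := welldef (x₁ + x₂) (a (x₁ + x₂)) (a x₁ + a x₂) (y (x₁ + x₂)) (y x₁ + y x₂)
      (ha _)
      (by rw [map_add, ← ha x₁, ← ha x₂, Submodule.Quotient.mk_add]; rfl)
      (hy _)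
      (by rw [map_add, hy, hy, add_smul]; abel)
    show φ (y (x₁ + x₂)) = φ (y x₁) + φ (y x₂)
    rw [h, map_add]
  · intro c x
    have h := welldef (c • x) (a (c • x)) (c * a x) (y (c • x)) (c • y x)
      (ha _)
      (by rw [map_smul, ← ha x]; exact Submodule.Quotient.mk_smul (idemIdeal A f) (r := c) (x := a x))
      (hy _)
      (by rw [map_smul, hy, smul_sub, smul_smul])
    show φ (y (c • x)) = c • φ (y x)
    rw [h, map_smul]
  · show P.complex.d 1 0 ≫ _ = φ
    apply ModuleCat.hom_ext
    apply LinearMap.ext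
    intro u
    show φ (y (P.complex.d 1 0 u)) = φ u
    refine welldef (P.complex.d 1 0 u) (a _) 0 (y _) u (ha _) ?_ (hy _)
      (by rw [zero_smul, sub_zero])
    rw [hεd u]
    exact Submodule.Quotient.mk_zero _

end
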